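/- If a 0-1 matrix A (rows = voters, columns = candidates) admits a 1D voter-candidate interval explanation (i.e., each row i and column j can be assigned a closed interval on the real line such that A[i][j] = 1 iff the two intervals intersect) and is domination-free (no column's support set of rows is a strict subset of another column's support set), then A has the candidate-interval property: the columns can be reordered so that in every row the 1-entries form a contiguous interval (consecutive ones property for rows). -/
import Mathlib


/-- `A` admits a 1D voter-candidate interval explanation: each row and each column is
assigned a closed real interval, and an entry is `1` iff the two intervals intersect. -/
def IsVCI {n m : ℕ} (A : Fin n → Fin m → Bool) : Prop :=
  ∃ (vl vr : Fin n → ℝ) (cl cr : Fin m → ℝ),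
    (∀ i, vl i ≤ vr i) ∧ (∀ j, cl j ≤ cr j) ∧
    ∀ i j, A i j = true ↔ (Set.Icc (vl i) (vr i) ∩ Set.Icc (cl j) (cr j)).Nonempty

/-- No column's support set is a strict subset of another column's support set. -/
def DominationFree {n m : ℕ} (A : Fin n → Fin m → Bool) : Prop :=
  ¬ ∃ j j' : Fin m, {i | A i j' = true} ⊂ {i | A i j = true}

/-- Candidate-interval (consecutive-ones for rows) property: the columns can be reordered so
that in every row the `1`-entries occupy consecutive positions. -/
def HasCI {n m : ℕ} (A : Fin n → Fin m → Bool) : Prop :=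
  ∃ σ : Fin m ≃ Fin m, ∀ i : Fin n, ∀ p q s : Fin m, p ≤ q → q ≤ s →
    A i (σ p) = true → A i (σ s) = true → A i (σ q) = true

theorem vci_dominationFree_implies_CI {n m : ℕ} (A : Fin n → Fin m → Bool)
    (hVCI : IsVCI A) (hDF : DominationFree A) : HasCI A := by
  obtain ⟨vl, vr, cl, cr, hv, hc, hA⟩ := hVCI
  -- characterization of entries
  have key : ∀ i j, A i j = true ↔ (cl j ≤ vr i ∧ vl i ≤ cr j) := by
    intro i j
    rw [hA i j, Set.Icc_inter_Icc, Set.nonempty_Icc, sup_le_iff, le_inf_iff, le_inf_iff]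
    constructor
    · rintro ⟨⟨_, h1⟩, h2, _⟩; exact ⟨h2, h1⟩
    · rintro ⟨h1, h2⟩; exact ⟨⟨hv i, h2⟩, h1, hc j⟩
  refine ⟨Tuple.sort cl, fun i p q s hpq hqs hp hs => ?_⟩
  have hmono := Tuple.monotone_sort cl
  rw [key] at hp hs ⊢
  refine ⟨le_trans (hmono hqs) hs.1, ?_⟩
  by_contra hlt
  push_neg at hlt
  apply hDF
  refine ⟨Tuple.sort cl p, Tuple.sort cl q, ?_, ?_⟩
  · intro i' hi'
    rw [Set.mem_setOf_eq, key] at hi' ⊢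
    exact ⟨le_trans (hmono hpq) hi'.1, le_trans hi'.2 (le_trans hlt.le hp.2)⟩
  · intro hsub
    have := hsub (show i ∈ {i | A i (Tuple.sort cl p) = true} from (key i _).2 hp)
    rw [Set.mem_setOf_eq, key] at this
    exact absurd this.2 (not_le_of_gt hlt)
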